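/- Let C be a nonempty closed convex subset of R^n, v in R^n, u in C, gamma, theta, lambda >= 0 with lambda < 1/2, and suppose w^+ in C satisfies <v - w^+, z - w^+> <= gamma ||v - u||^2 + theta ||w^+ - v||^2 + lambda ||w^+ - u||^2 for all z in C. Then ||w^+ - P_C(v)||^2 <= ((2 gamma + 2 lambda)/(1 - 2 lambda)) ||v - u||^2 + (2 theta/(1 - 2 lambda)) ||w^+ - v||^2. -/

import Mathlib

theorem stmt_8 {n : ℕ} (C : Set (EuclideanSpace ℝ (Fin n)))
    (hne : C.Nonempty) (hcl : IsClosed C) (hcv : Convex ℝ C)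
    (P : EuclideanSpace ℝ (Fin n) → EuclideanSpace ℝ (Fin n))
    (hP : ∀ u, P u ∈ C ∧ ∀ z ∈ C, ‖u - P u‖ ≤ ‖u - z‖)
    (v : EuclideanSpace ℝ (Fin n)) (u : EuclideanSpace ℝ (Fin n)) (hu : u ∈ C)
    (γ θ lam : ℝ) (hγ : 0 ≤ γ) (hθ : 0 ≤ θ) (hlam : 0 ≤ lam) (hlam2 : lam < 1 / 2)
    (wplus : EuclideanSpace ℝ (Fin n)) (hwC : wplus ∈ C)
    (hinexact : ∀ z ∈ C, @inner ℝ _ _ (v - wplus) (z - wplus) ≤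
      γ * ‖v - u‖ ^ 2 + θ * ‖wplus - v‖ ^ 2 + lam * ‖wplus - u‖ ^ 2) :
    ‖wplus - P v‖ ^ 2 ≤ (2 * γ + 2 * lam) / (1 - 2 * lam) * ‖v - u‖ ^ 2
      + 2 * θ / (1 - 2 * lam) * ‖wplus - v‖ ^ 2 := by
  set p := P v with hp
  have hpC : p ∈ C := (hP v).1
  -- variational inequality for exact projection
  have hVI : ∀ z ∈ C, @inner ℝ _ _ (v - p) (z - p) ≤ 0 := by
    haveI : Nonempty C := hne.to_subtype
    rw [← norm_eq_iInf_iff_real_inner_le_zero hcv hpC]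
    apply le_antisymm
    · exact le_ciInf fun w => (hP v).2 w w.2
    · have hbdd : BddBelow (Set.range fun w : C => ‖v - (w : EuclideanSpace ℝ (Fin n))‖) :=
        ⟨0, by rintro x ⟨w, rfl⟩; positivity⟩
      exact ciInf_le hbdd (⟨p, hpC⟩ : C)
  have h2 : @inner ℝ _ _ (v - p) (wplus - p) ≤ 0 := hVI wplus hwC
  have h1 : @inner ℝ _ _ (v - wplus) (p - wplus) ≤
      γ * ‖v - u‖ ^ 2 + θ * ‖wplus - v‖ ^ 2 + lam * ‖wplus - u‖ ^ 2 :=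
    hinexact p hpC
  -- expansion : ‖wplus - p‖^2 = ⟪v - wplus, p - wplus⟫ + ⟪v - p, wplus - p⟫
  have expand : ‖wplus - p‖ ^ 2 =
      @inner ℝ _ _ (v - wplus) (p - wplus) + @inner ℝ _ _ (v - p) (wplus - p) := by
    have h3 : @inner ℝ _ _ (v - p) (wplus - p) = -(@inner ℝ _ _ (v - p) (p - wplus)) := by
      rw [← inner_neg_right]; congr 1; abel
    rw [h3, ← sub_eq_add_neg, ← inner_sub_left]
    have h4 : (v - wplus) - (v - p) = p - wplus := by abel
    rw [h4, real_inner_self_eq_norm_sq, norm_sub_rev]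
  have key : ‖wplus - p‖ ^ 2 ≤
      γ * ‖v - u‖ ^ 2 + θ * ‖wplus - v‖ ^ 2 + lam * ‖wplus - u‖ ^ 2 := by
    rw [expand]; linarith
  -- nonexpansiveness at u : ‖p - u‖ ≤ ‖v - u‖
  have hpu : ‖p - u‖ ^ 2 ≤ ‖v - u‖ ^ 2 := by
    have hVIu : @inner ℝ _ _ (v - p) (u - p) ≤ 0 := hVI u hu
    have hid : ‖p - u‖ ^ 2 = @inner ℝ _ _ (v - u) (p - u) - @inner ℝ _ _ (v - p) (p - u) := by
      rw [← inner_sub_left]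
      have : (v - u) - (v - p) = p - u := by abel
      rw [this, real_inner_self_eq_norm_sq]
    have hneg : @inner ℝ _ _ (v - p) (p - u) = -(@inner ℝ _ _ (v - p) (u - p)) := by
      rw [← inner_neg_right]; congr 1; abel
    have hcs : @inner ℝ _ _ (v - u) (p - u) ≤ ‖v - u‖ * ‖p - u‖ :=
      real_inner_le_norm _ _
    have h5 : ‖p - u‖ ^ 2 ≤ ‖v - u‖ * ‖p - u‖ := by rw [hid, hneg]; linarith
    nlinarith [norm_nonneg (p - u), norm_nonneg (v - u)]
  -- ‖wplus - u‖^2 ≤ 2‖wplus - p‖^2 + 2‖p - u‖^2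
  have hwu : ‖wplus - u‖ ^ 2 ≤ 2 * ‖wplus - p‖ ^ 2 + 2 * ‖p - u‖ ^ 2 := by
    have : wplus - u = (wplus - p) + (p - u) := by abel
    rw [this]
    have hcs : @inner ℝ _ _ (wplus - p) (p - u) ≤ ‖wplus - p‖ * ‖p - u‖ :=
      real_inner_le_norm _ _
    rw [norm_add_sq_real]
    nlinarith [sq_nonneg (‖wplus - p‖ - ‖p - u‖)]
  have h12 : (0:ℝ) < 1 - 2 * lam := by linarith
  rw [div_mul_eq_mul_div, div_mul_eq_mul_div, ← add_div, le_div_iff₀ h12]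
  nlinarith [sq_nonneg ‖v - u‖, sq_nonneg ‖wplus - v‖, sq_nonneg ‖wplus - p‖,
    mul_nonneg hlam (sq_nonneg ‖wplus - u‖)]
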